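/- arXiv:1006.0469 — 5 statements merged into one kernel-verified Lean document; each statement's English description precedes it below -/
import Mathlib

section
/- Let G be a bipartite graph on [n] ∪ [m] that is d-left-regular, and suppose that for every subset S ⊆ [n] with |S| ≤ k_max we have |Γ(S)| ≥ (d − Δ)|S|. Then for every such S, the number of unique neighbors of S (vertices in [m] with exactly one neighbor in S) is at least (d − 2Δ)|S|. -/
/-- A `d`-left-regular bipartite graph on `[n] ∪ [m]` (given by the neighborhood map `E`)
which is a `(kmax, d - Δ)`-expander is a `(kmax, d - 2Δ)`-unique-neighbor expander. -/
theorem stmt0 (n m d Δ kmax : ℕ) (E : Fin n → Finset (Fin m))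
    (hreg : ∀ u, (E u).card = d)
    (hexp : ∀ S : Finset (Fin n), S.card ≤ kmax →
      ((d : ℤ) - Δ) * S.card ≤ ((S.biUnion E).card : ℤ)) :
    ∀ S : Finset (Fin n), S.card ≤ kmax →
      ((d : ℤ) - 2 * Δ) * S.card ≤
        ((Finset.univ.filter
          (fun v : Fin m => (S.filter (fun u => v ∈ E u)).card = 1)).card : ℤ) := by
  intro S hS
  set f : Fin m → ℕ := fun v => (S.filter (fun u => v ∈ E u)).card with hf
  set N := S.biUnion E with hN
  set U := Finset.univ.filter (fun v : Fin m => f v = 1) with hU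
  -- total degree count
  have hsum : ∑ v ∈ N, f v = d * S.card := by
    have h0 : ∑ v ∈ N, f v = ∑ v : Fin m, f v := by
      refine Finset.sum_subset (Finset.subset_univ N) ?_
      intro v _ hv
      simp only [hf, Finset.card_eq_zero, Finset.filter_eq_empty_iff]
      intro u hu hvu
      exact hv (Finset.mem_biUnion.2 ⟨u, hu, hvu⟩)
    rw [h0]
    have : ∑ v : Fin m, f v = ∑ u ∈ S, (E u).card := by
      simp only [hf, Finset.card_filter]
      rw [Finset.sum_comm]
      congr 1
      ext u
      simp [Finset.card_filter]
    rw [this]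
    simp [hreg, mul_comm]
  -- each neighbor has degree ≥ 1, and ≥ 2 unless unique
  have hkey : 2 * N.card ≤ d * S.card + U.card := by
    have hUeq : (N.filter (fun v => f v = 1)).card = U.card := by
      congr 1
      ext v
      simp only [Finset.mem_filter, hU, Finset.mem_univ, true_and, and_iff_right_iff_imp]
      intro hv1
      have : f v ≠ 0 := by omega
      obtain ⟨u, hu⟩ := Finset.card_pos.1 (Nat.pos_of_ne_zero this)
      obtain ⟨hu1, hu2⟩ := Finset.mem_filter.1 hu
      exact Finset.mem_biUnion.2 ⟨u, hu1, hu2⟩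
    calc 2 * N.card = ∑ v ∈ N, 2 := by simp [mul_comm]
      _ ≤ ∑ v ∈ N, (f v + if f v = 1 then 1 else 0) := by
          refine Finset.sum_le_sum ?_
          intro v hv
          have : f v ≠ 0 := by
            obtain ⟨u, hu, hvu⟩ := Finset.mem_biUnion.1 hv
            exact Finset.card_ne_zero_of_mem (Finset.mem_filter.2 ⟨hu, hvu⟩)
          rcases eq_or_ne (f v) 1 with h1 | h1
          · simp [h1]
          · simp only [h1, if_false, add_zero]; omega
      _ = d * S.card + U.card := by
          rw [Finset.sum_add_distrib, hsum, ← Finset.card_filter, hUeq]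
  -- combine with expansion
  have hexpS := hexp S hS
  have hkey' : (2 : ℤ) * N.card ≤ d * S.card + U.card := by exact_mod_cast hkey
  have : ((d : ℤ) - 2 * Δ) * S.card ≤ 2 * N.card - d * S.card := by
    have := hexpS
    nlinarith [this]
  omega
end

section
/- Let G be a (d,r)-biregular bipartite graph on [n] ∪ [m] (so nd = mr) that is an (ℓ, d−Δ)-unique-neighbor expander. Fix a tranche value function v: {0,...,r} → ℝ that is nondecreasing with v(g+i) − v(g) ≤ iδ for all g, i. For L ⊆ [n] with |L| = ℓ, define TV(L) = Σ_{j∈[m]} v(r − |Γ(j) ∩ L|). Then for any two subsets L, L' ⊆ [n] of size ℓ, |TV(L') − TV(L)| ≤ 2Δℓδ. -/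
open Finset

private theorem keyAux {n m : ℕ} (d r Δ ℓ : ℕ) (δ : ℝ) (hδ : 0 ≤ δ)
    (E : Fin n → Finset (Fin m))
    (hright : ∀ v : Fin m, (Finset.univ.filter (fun u => v ∈ E u)).card = r)
    (hexp : ∀ S : Finset (Fin n), S.card ≤ ℓ →
      ((d : ℝ) - Δ) * S.card ≤
        ((Finset.univ.filter
          (fun v : Fin m => (S.filter (fun u => v ∈ E u)).card = 1)).card : ℝ))
    (v : ℕ → ℝ) (hmono : ∀ i j, i ≤ j → j ≤ r → v i ≤ v j)
    (hlip : ∀ g i, g + i ≤ r → v (g + i) - v g ≤ i * δ)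
    (S : Finset (Fin n)) (hS : S.card = ℓ)
    (hsum : ∑ j : Fin m, (S.filter (fun u => j ∈ E u)).card = ℓ * d) :
    ∃ U : ℝ, ((d:ℝ) - Δ) * ℓ ≤ U ∧ U ≤ (d:ℝ) * ℓ ∧
      U * (v r - v (r-1)) ≤
        (m : ℝ) * v r - ∑ j : Fin m, v (r - (S.filter (fun u => j ∈ E u)).card) ∧
      (m : ℝ) * v r - ∑ j : Fin m, v (r - (S.filter (fun u => j ∈ E u)).card)
        ≤ U * (v r - v (r-1)) + ((d:ℝ) * ℓ - U) * δ := by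
  set D : ℝ := v r - v (r-1) with hD
  set cc : Fin m → ℕ := fun j => (S.filter (fun u => j ∈ E u)).card with hcc
  set U0 : ℕ := (Finset.univ.filter (fun j => cc j = 1)).card with hU0
  have hcr : ∀ j, cc j ≤ r := by
    intro j
    calc cc j ≤ (Finset.univ.filter (fun u => j ∈ E u)).card :=
          Finset.card_le_card (Finset.filter_subset_filter _ (Finset.subset_univ S))
      _ = r := hright j
  -- expansion lower bound
  have hexpS := hexp S (le_of_eq hS)
  rw [hS] at hexpS
  -- U0 ≤ ℓ * d
  have hU0sum : U0 = ∑ j ∈ Finset.univ.filter (fun j => cc j = 1), cc j := by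
    rw [hU0, Finset.card_eq_sum_ones]
    exact Finset.sum_congr rfl (fun j hj => ((Finset.mem_filter.1 hj).2).symm)
  have hU0le : U0 ≤ ℓ * d := by
    rw [hU0sum, ← hsum]
    exact Finset.sum_le_sum_of_subset (Finset.filter_subset _ _)
  -- split the total degree sum
  have hsplit : (U0 : ℝ) + ∑ j ∈ Finset.univ.filter (fun j => ¬ cc j = 1), (cc j : ℝ)
      = (ℓ : ℝ) * d := by
    have h1 := Finset.sum_filter_add_sum_filter_not Finset.univ (fun j => cc j = 1) cc
    rw [← hU0sum, hsum] at h1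
    have h2 := congrArg (Nat.cast : ℕ → ℝ) h1
    push_cast at h2
    linarith [h2]
  have hconv : (m:ℝ) * v r - ∑ j : Fin m, v (r - cc j)
      = ∑ j : Fin m, (v r - v (r - cc j)) := by
    rw [Finset.sum_sub_distrib, Finset.sum_const, Finset.card_univ, Fintype.card_fin,
      nsmul_eq_mul]
  have hlow : ∑ j : Fin m, (if cc j = 1 then D else 0) ≤ ∑ j : Fin m, (v r - v (r - cc j)) := by
    apply Finset.sum_le_sum
    intro j _
    by_cases h : cc j = 1
    · have h1 : cc j = 1 := h
      simp only [if_pos h, h1, hD]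
      exact le_rfl
    · simp only [if_neg h]
      have := hmono (r - cc j) r (Nat.sub_le _ _) le_rfl
      linarith
  have hlowval : ∑ j : Fin m, (if cc j = 1 then D else 0) = (U0:ℝ) * D := by
    rw [← Finset.sum_filter, Finset.sum_const, ← hU0, nsmul_eq_mul]
  have hup : ∑ j : Fin m, (v r - v (r - cc j))
      ≤ ∑ j : Fin m, (if cc j = 1 then D else (cc j : ℝ) * δ) := by
    apply Finset.sum_le_sum
    intro j _
    by_cases h : cc j = 1
    · have h1 : cc j = 1 := h
      simp only [if_pos h, h1, hD]
      exact le_rfl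
    · simp only [if_neg h]
      have h2 := hlip (r - cc j) (cc j) (le_of_eq (Nat.sub_add_cancel (hcr j)))
      rw [Nat.sub_add_cancel (hcr j)] at h2
      exact h2
  have hupval : ∑ j : Fin m, (if cc j = 1 then D else (cc j : ℝ) * δ)
      = (U0:ℝ) * D + ((ℓ:ℝ) * d - U0) * δ := by
    rw [Finset.sum_ite, Finset.sum_const, ← hU0, nsmul_eq_mul, ← Finset.sum_mul]
    have h3 : ∑ j ∈ Finset.univ.filter (fun j => ¬ cc j = 1), (cc j : ℝ) = (ℓ:ℝ)*d - U0 := by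
      linarith [hsplit]
    rw [h3]
  refine ⟨(U0 : ℝ), ?_, ?_, ?_, ?_⟩
  · exact hexpS
  · have h := (Nat.cast_le (α := ℝ)).2 hU0le
    push_cast at h
    linarith
  · rw [hconv]
    linarith [hlow, hlowval]
  · rw [hconv]
    nlinarith [hup, hupval]

/-- Abstract form of Theorem `unique-cdo` for a single tranche: for a `(d,r)`-biregular
`(ℓ, d−Δ)`-unique-neighbor expander and a nondecreasing tranche-value function `v` with
increments `v(g+i) − v(g) ≤ iδ`, the total tranche value changes by at most `2Δℓδ`
under any relocation of the `ℓ` lemons. -/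
theorem stmt11 (n m d r Δ ℓ : ℕ) (δ : ℝ) (hδ : 0 ≤ δ)
    (hbal : n * d = m * r)
    (E : Fin n → Finset (Fin m))
    (hleft : ∀ u, (E u).card = d)
    (hright : ∀ v : Fin m, (Finset.univ.filter (fun u => v ∈ E u)).card = r)
    (hexp : ∀ S : Finset (Fin n), S.card ≤ ℓ →
      ((d : ℝ) - Δ) * S.card ≤
        ((Finset.univ.filter
          (fun v : Fin m => (S.filter (fun u => v ∈ E u)).card = 1)).card : ℝ))
    (v : ℕ → ℝ) (hmono : ∀ i j, i ≤ j → j ≤ r → v i ≤ v j)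
    (hlip : ∀ g i, g + i ≤ r → v (g + i) - v g ≤ i * δ)
    (L L' : Finset (Fin n)) (hL : L.card = ℓ) (hL' : L'.card = ℓ) :
    |(∑ j : Fin m, v (r - (L'.filter (fun u => j ∈ E u)).card)) -
      (∑ j : Fin m, v (r - (L.filter (fun u => j ∈ E u)).card))| ≤ 2 * Δ * ℓ * δ := by
  have hdeg : ∀ S : Finset (Fin n),
      ∑ j : Fin m, (S.filter (fun u => j ∈ E u)).card = S.card * d := by
    intro S
    calc ∑ j : Fin m, (S.filter (fun u => j ∈ E u)).card
        = ∑ j : Fin m, ∑ u ∈ S, (if j ∈ E u then 1 else 0) := by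
          exact Finset.sum_congr rfl fun j _ => Finset.card_filter _ _
      _ = ∑ u ∈ S, ∑ j : Fin m, (if j ∈ E u then 1 else 0) := Finset.sum_comm
      _ = ∑ u ∈ S, (E u).card := by
          refine Finset.sum_congr rfl fun u _ => ?_
          rw [Finset.sum_ite_mem, Finset.univ_inter, Finset.sum_const, smul_eq_mul, mul_one]
      _ = S.card * d := by
          simp only [hleft]
          rw [Finset.sum_const, smul_eq_mul]
  obtain ⟨U, hU1, hU2, hU3, hU4⟩ := keyAux d r Δ ℓ δ hδ E hright hexp v hmono hlip L hL
    (by rw [hdeg L, hL])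
  obtain ⟨U', hU1', hU2', hU3', hU4'⟩ := keyAux d r Δ ℓ δ hδ E hright hexp v hmono hlip L' hL'
    (by rw [hdeg L', hL'])
  have hD0 : (0:ℝ) ≤ v r - v (r-1) := sub_nonneg.2 (hmono (r-1) r (Nat.sub_le r 1) le_rfl)
  have hDδ : v r - v (r-1) ≤ δ := by
    rcases Nat.eq_zero_or_pos r with h0 | hp
    · rw [h0]
      simp only [Nat.zero_sub, sub_self]
      exact hδ
    · have h2 := hlip (r-1) 1 (by omega)
      rw [Nat.sub_add_cancel hp] at h2
      simpa using h2
  have hring : (d:ℝ)*ℓ - ((d:ℝ)-Δ)*ℓ = Δ*ℓ := by ring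
  have hΔℓ : (0:ℝ) ≤ (Δ:ℝ)*ℓ := by positivity
  have a1 : (U - U') * (v r - v (r-1)) ≤ (Δ:ℝ)*ℓ*(v r - v (r-1)) := by
    have : U - U' ≤ (Δ:ℝ)*ℓ := by linarith
    nlinarith
  have a2 : (U' - U) * (v r - v (r-1)) ≤ (Δ:ℝ)*ℓ*(v r - v (r-1)) := by
    have : U' - U ≤ (Δ:ℝ)*ℓ := by linarith
    nlinarith
  have a3 : (Δ:ℝ)*ℓ*(v r - v (r-1)) ≤ (Δ:ℝ)*ℓ*δ := mul_le_mul_of_nonneg_left hDδ hΔℓ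
  have a4 : ((d:ℝ)*ℓ - U)*δ ≤ (Δ:ℝ)*ℓ*δ := by
    have : (d:ℝ)*ℓ - U ≤ (Δ:ℝ)*ℓ := by linarith
    nlinarith
  have a5 : ((d:ℝ)*ℓ - U')*δ ≤ (Δ:ℝ)*ℓ*δ := by
    have : (d:ℝ)*ℓ - U' ≤ (Δ:ℝ)*ℓ := by linarith
    nlinarith
  rw [abs_sub_le_iff]
  constructor
  · linarith [hU3, hU4', a2, a3, a4]
  · linarith [hU3', hU4, a1, a3, a5]
end

section
/- Let G be a (d,r)-biregular bipartite graph on [n] ∪ [m] that is an (ℓ, d−Δ)-unique-neighbor expander, and let v₁, ..., v_s: {0,...,r} → ℝ each be nondecreasing with Σ_{j=1}^s (v_j(g+i) − v_j(g)) ≤ iδ for all g, i (and in particular each v_j(g+i) − v_j(g) ≥ 0). For L ⊆ [n] of size ℓ define TV_j(L) = Σ_{u∈[m]} v_j(r − |Γ(u) ∩ L|). Then for any two subsets L, L' of size ℓ, Σ_{j=1}^s |TV_j(L') − TV_j(L)| ≤ 3Δℓδ. -/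
open Finset

private lemma deg_le_r' {n m r : ℕ} (E : Fin n → Finset (Fin m))
    (hright : ∀ v : Fin m, (Finset.univ.filter (fun u => v ∈ E u)).card = r)
    (L : Finset (Fin n)) (u : Fin m) :
    (L.filter (fun w => u ∈ E w)).card ≤ r := by
  rw [← hright u]
  apply Finset.card_le_card
  intro w hw
  simp only [Finset.mem_filter] at *
  exact ⟨Finset.mem_univ _, hw.2⟩

private lemma sum_deg' {n m d : ℕ} (E : Fin n → Finset (Fin m))
    (hleft : ∀ u, (E u).card = d) (L : Finset (Fin n)) :
    ∑ u : Fin m, (L.filter (fun w => u ∈ E w)).card = d * L.card := by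
  simp_rw [Finset.card_filter]
  rw [Finset.sum_comm]
  have : ∀ w : Fin n, (∑ u : Fin m, if u ∈ E w then 1 else 0) = d := by
    intro w
    rw [← Finset.card_filter]
    simpa using hleft w
  rw [Finset.sum_congr rfl (fun w _ => this w), Finset.sum_const, smul_eq_mul, mul_comm]

private lemma loss_bounds' {n m d r Δ ℓ s : ℕ} (δ : ℝ) (hδ : 0 ≤ δ)
    (E : Fin n → Finset (Fin m))
    (hleft : ∀ u, (E u).card = d)
    (hright : ∀ v : Fin m, (Finset.univ.filter (fun u => v ∈ E u)).card = r)
    (hexp : ∀ S : Finset (Fin n), S.card ≤ ℓ →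
      ((d : ℝ) - Δ) * S.card ≤
        ((Finset.univ.filter
          (fun v : Fin m => (S.filter (fun u => v ∈ E u)).card = 1)).card : ℝ))
    (v : Fin s → ℕ → ℝ)
    (hmono : ∀ j, ∀ i i', i ≤ i' → i' ≤ r → v j i ≤ v j i')
    (hlip : ∀ g i, g + i ≤ r → ∑ j : Fin s, (v j (g + i) - v j g) ≤ i * δ)
    (L : Finset (Fin n)) (hL : L.card = ℓ) :
    (∀ j, ((d : ℝ) - Δ) * ℓ * (v j r - v j (r - 1)) ≤
        ∑ u : Fin m, (v j r - v j (r - (L.filter (fun w => u ∈ E w)).card)))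
    ∧ ∑ j : Fin s, ∑ u : Fin m, (v j r - v j (r - (L.filter (fun w => u ∈ E w)).card))
        ≤ Δ * ℓ * δ + ((d : ℝ) - Δ) * ℓ * ∑ j : Fin s, (v j r - v j (r - 1)) := by
  set deg : Fin m → ℕ := fun u => (L.filter (fun w => u ∈ E w)).card with hdeg
  have hdegle : ∀ u, deg u ≤ r := fun u => deg_le_r' E hright L u
  have hsumdeg : ∑ u : Fin m, deg u = d * ℓ := by rw [hdeg, sum_deg' E hleft L, hL]
  have hcj : ∀ j, 0 ≤ v j r - v j (r - 1) := by
    intro j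
    have := hmono j (r - 1) r (Nat.sub_le r 1) le_rfl
    linarith
  have hterm : ∀ j u, 0 ≤ v j r - v j (r - deg u) := by
    intro j u
    have := hmono j (r - deg u) r (Nat.sub_le r _) le_rfl
    linarith
  set U : Finset (Fin m) := Finset.univ.filter (fun u => deg u = 1) with hU
  have hUcard : ((d : ℝ) - Δ) * ℓ ≤ U.card := by
    have := hexp L (le_of_eq hL)
    rw [hL] at this
    exact this
  constructor
  · intro j
    have h1 : ∑ u ∈ U, (v j r - v j (r - deg u)) ≤
        ∑ u : Fin m, (v j r - v j (r - deg u)) :=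
      Finset.sum_le_sum_of_subset_of_nonneg (Finset.subset_univ U)
        (fun u _ _ => hterm j u)
    have h2 : ∑ u ∈ U, (v j r - v j (r - deg u)) = U.card * (v j r - v j (r - 1)) := by
      rw [Finset.sum_congr rfl (fun u hu => by
        rw [(Finset.mem_filter.mp hu).2]), Finset.sum_const, nsmul_eq_mul]
    have h3 : ((d : ℝ) - Δ) * ℓ * (v j r - v j (r - 1)) ≤
        U.card * (v j r - v j (r - 1)) :=
      mul_le_mul_of_nonneg_right hUcard (hcj j)
    linarith
  · set c : ℝ := ∑ j : Fin s, (v j r - v j (r - 1)) with hc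
    have hc0 : 0 ≤ c := Finset.sum_nonneg (fun j _ => hcj j)
    set P : Finset (Fin m) := Finset.univ.filter (fun u => deg u ≠ 0) with hP
    have hUP : U ⊆ P := by
      intro u hu
      simp only [hU, Finset.mem_filter] at hu
      simp only [hP, Finset.mem_filter]
      exact ⟨hu.1, by omega⟩
    have hNlo : ((d : ℝ) - Δ) * ℓ ≤ P.card := by
      have := Finset.card_le_card hUP
      have : (U.card : ℝ) ≤ P.card := by exact_mod_cast this
      linarith
    have hNhi : (P.card : ℝ) ≤ (d : ℝ) * ℓ := by
      have h1 : P.card ≤ ∑ u ∈ P, deg u := by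
        calc P.card = ∑ u ∈ P, 1 := by simp
        _ ≤ ∑ u ∈ P, deg u := Finset.sum_le_sum (fun u hu => by
            simp only [hP, Finset.mem_filter] at hu; omega)
      have h2 : ∑ u ∈ P, deg u ≤ ∑ u : Fin m, deg u :=
        Finset.sum_le_sum_of_subset (Finset.subset_univ P)
      have h3 : P.card ≤ d * ℓ := h1.trans (hsumdeg ▸ h2)
      exact_mod_cast h3
  -- case r = 0 or deal with c ≤ δ
    rcases Nat.eq_zero_or_pos r with hr | hr
    · -- all degrees 0, sum is 0
      have : ∀ j u, v j r - v j (r - deg u) = 0 := by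
        intro j u
        have h0 : deg u = 0 := by have := hdegle u; omega
        rw [h0, Nat.sub_zero, sub_self]
      rw [Finset.sum_congr rfl (fun j _ => Finset.sum_congr rfl (fun u _ => this j u))]
      simp only [Finset.sum_const_zero]
      have hc0' : c = 0 := by
        rw [hc]
        apply Finset.sum_eq_zero
        intro j _
        rw [hr]
        simp
      rw [hc0', mul_zero, add_zero]
      positivity
    · have hcδ : c ≤ δ := by
        have := hlip (r - 1) 1 (by omega)
        have heq : r - 1 + 1 = r := by omega
        rw [heq] at this
        simpa [hc] using this
      -- swap sums
      rw [Finset.sum_comm]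
      -- restrict to P
      have hoffP : ∀ u ∈ Finset.univ, u ∉ P → ∑ j : Fin s, (v j r - v j (r - deg u)) = 0 := by
        intro u _ hu
        simp only [hP, Finset.mem_filter, Finset.mem_univ, true_and, not_not] at hu
        rw [hu]
        simp
      rw [← Finset.sum_subset (Finset.subset_univ P) hoffP]
      -- per-u bound
      have hper : ∀ u ∈ P, ∑ j : Fin s, (v j r - v j (r - deg u)) ≤
          c + ((deg u - 1 : ℕ) : ℝ) * δ := by
        intro u hu
        have hk1 : 1 ≤ deg u := by
          simp only [hP, Finset.mem_filter] at hu; omega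
        have hkr : deg u ≤ r := hdegle u
        have h2 := hlip (r - deg u) (deg u - 1) (by omega)
        have heq : r - deg u + (deg u - 1) = r - 1 := by omega
        rw [heq] at h2
        have hsplit : ∑ j : Fin s, (v j r - v j (r - deg u)) =
            (∑ j : Fin s, (v j r - v j (r - 1))) +
            ∑ j : Fin s, (v j (r - 1) - v j (r - deg u)) := by
          rw [← Finset.sum_add_distrib]
          apply Finset.sum_congr rfl
          intros; ring
        rw [hsplit]
        have : ∑ j : Fin s, (v j (r - 1) - v j (r - deg u)) ≤ ((deg u - 1 : ℕ) : ℝ) * δ := h2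
        linarith [le_refl c]
      have hbound := Finset.sum_le_sum hper
      have hsum2 : ∑ u ∈ P, (c + ((deg u - 1 : ℕ) : ℝ) * δ) =
          P.card * c + ((d * ℓ : ℕ) - (P.card : ℝ)) * δ := by
        rw [Finset.sum_add_distrib, Finset.sum_const, nsmul_eq_mul, ← Finset.sum_mul]
        congr 1
        congr 1
        have : ∀ u ∈ P, ((deg u - 1 : ℕ) : ℝ) = (deg u : ℝ) - 1 := by
          intro u hu
          have hk1 : 1 ≤ deg u := by simp only [hP, Finset.mem_filter] at hu; omega
          push_cast [Nat.cast_sub hk1]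
          ring
        rw [Finset.sum_congr rfl this, Finset.sum_sub_distrib, Finset.sum_const,
          nsmul_eq_mul, mul_one]
        have hPdeg : ∑ u ∈ P, deg u = d * ℓ := by
          rw [← hsumdeg]
          apply Finset.sum_subset (Finset.subset_univ P)
          intro u _ hu
          simp only [hP, Finset.mem_filter, Finset.mem_univ, true_and, not_not] at hu
          exact hu
        rw [← hPdeg]
        push_cast
        ring
      rw [hsum2] at hbound
      have hgoal : (P.card : ℝ) * c + ((d * ℓ : ℕ) - (P.card : ℝ)) * δ ≤
          Δ * ℓ * δ + ((d : ℝ) - Δ) * ℓ * c := by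
        have hprod : 0 ≤ (δ - c) * ((P.card : ℝ) - ((d : ℝ) - Δ) * ℓ) :=
          mul_nonneg (by linarith) (by linarith)
        push_cast
        nlinarith [hprod]
      calc ∑ u ∈ P, ∑ j : Fin s, (v j r - v j (r - deg u)) ≤ _ := hbound
        _ ≤ _ := hgoal

/-- Abstract form of Theorem `unique-cdo` for the entire CDO: with tranche-value
functions `v₁,...,v_s`, each nondecreasing and with total increments
`Σ_j (v_j(g+i) − v_j(g)) ≤ iδ`, the L1-norm of the change of the vector of total
tranche values under any relocation of the `ℓ` lemons is at most `3Δℓδ`. -/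
theorem stmt12 (n m d r Δ ℓ s : ℕ) (δ : ℝ) (hδ : 0 ≤ δ)
    (hbal : n * d = m * r)
    (E : Fin n → Finset (Fin m))
    (hleft : ∀ u, (E u).card = d)
    (hright : ∀ v : Fin m, (Finset.univ.filter (fun u => v ∈ E u)).card = r)
    (hexp : ∀ S : Finset (Fin n), S.card ≤ ℓ →
      ((d : ℝ) - Δ) * S.card ≤
        ((Finset.univ.filter
          (fun v : Fin m => (S.filter (fun u => v ∈ E u)).card = 1)).card : ℝ))
    (v : Fin s → ℕ → ℝ)
    (hmono : ∀ j, ∀ i i', i ≤ i' → i' ≤ r → v j i ≤ v j i')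
    (hlip : ∀ g i, g + i ≤ r → ∑ j : Fin s, (v j (g + i) - v j g) ≤ i * δ)
    (L L' : Finset (Fin n)) (hL : L.card = ℓ) (hL' : L'.card = ℓ) :
    ∑ j : Fin s,
      |(∑ u : Fin m, v j (r - (L'.filter (fun w => u ∈ E w)).card)) -
        (∑ u : Fin m, v j (r - (L.filter (fun w => u ∈ E w)).card))| ≤ 3 * Δ * ℓ * δ := by
  obtain ⟨hlo, hhi⟩ := loss_bounds' δ hδ E hleft hright hexp v hmono hlip L hL
  obtain ⟨hlo', hhi'⟩ := loss_bounds' δ hδ E hleft hright hexp v hmono hlip L' hL'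
  set a : Fin s → ℝ := fun j => ∑ u : Fin m, (v j r - v j (r - (L.filter (fun w => u ∈ E w)).card)) with ha
  set b : Fin s → ℝ := fun j => ∑ u : Fin m, (v j r - v j (r - (L'.filter (fun w => u ∈ E w)).card)) with hb
  set lo : Fin s → ℝ := fun j => ((d : ℝ) - Δ) * ℓ * (v j r - v j (r - 1)) with hlodef
  have hdiff : ∀ j : Fin s,
      (∑ u : Fin m, v j (r - (L'.filter (fun w => u ∈ E w)).card)) -
        (∑ u : Fin m, v j (r - (L.filter (fun w => u ∈ E w)).card)) = a j - b j := by
    intro j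
    rw [ha, hb]
    simp only
    rw [← Finset.sum_sub_distrib, ← Finset.sum_sub_distrib]
    apply Finset.sum_congr rfl
    intros; ring
  have habs : ∀ j : Fin s, |a j - b j| ≤ (a j - lo j) + (b j - lo j) := by
    intro j
    have h1 : lo j ≤ a j := hlo j
    have h2 : lo j ≤ b j := hlo' j
    rw [abs_le]
    constructor <;> linarith
  have hsum : ∑ j : Fin s, |a j - b j| ≤
      (∑ j : Fin s, a j) + (∑ j : Fin s, b j) - 2 * ∑ j : Fin s, lo j := by
    have := Finset.sum_le_sum (fun j (_ : j ∈ Finset.univ) => habs j)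
    calc ∑ j : Fin s, |a j - b j| ≤ ∑ j : Fin s, ((a j - lo j) + (b j - lo j)) := this
      _ = (∑ j : Fin s, a j) + (∑ j : Fin s, b j) - 2 * ∑ j : Fin s, lo j := by
          rw [Finset.sum_add_distrib, Finset.sum_sub_distrib, Finset.sum_sub_distrib]
          ring
  have hlosum : ∑ j : Fin s, lo j =
      ((d : ℝ) - Δ) * ℓ * ∑ j : Fin s, (v j r - v j (r - 1)) := by
    rw [hlodef, ← Finset.mul_sum]
  have hfin : (∑ j : Fin s, a j) + (∑ j : Fin s, b j) - 2 * ∑ j : Fin s, lo j ≤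
      3 * Δ * ℓ * δ := by
    rw [hlosum]
    have hnn : (0 : ℝ) ≤ (Δ : ℝ) * ℓ * δ := by positivity
    linarith [hhi, hhi']
  calc ∑ j : Fin s,
      |(∑ u : Fin m, v j (r - (L'.filter (fun w => u ∈ E w)).card)) -
        (∑ u : Fin m, v j (r - (L.filter (fun w => u ∈ E w)).card))|
      = ∑ j : Fin s, |a j - b j| := by
        apply Finset.sum_congr rfl
        intro j _
        rw [hdiff j]
    _ ≤ _ := le_trans hsum hfin
end

section
/- Let G₀ be a d₀-left-regular bipartite graph on [n] ∪ [m₀], and let m, d, r be positive integers with nd = mr, d₀ < d ≤ m₀, and m ≥ m₀d/(d−d₀). Then the right vertices of G₀ can be split (each right vertex v of degree r_v > r replaced by ⌈r_v/r⌉ vertices among which the edges of v are partitioned, with ⌊r_v/r⌋ of them receiving exactly r edges), isolated right vertices added, and edges added, so as to obtain a simple (d,r)-biregular bipartite graph on [n] ∪ [m]; moreover this construction preserves any (k_max, γ)-expansion property of left subsets (i.e., if every S ⊆ [n] with |S| ≤ k_max has |Γ(S)| ≥ γ|S| in G₀, the same holds in the new graph). -/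
set_option maxHeartbeats 1600000

open Finset

namespace S14

section Sched

variable {n m : ℕ}

/-- capacity-constrained Hall condition -/
def Hall (κ : Fin n → ℕ) (δ : Fin m → ℕ) (F : Fin m → Finset (Fin n)) : Prop :=
  ∀ T : Finset (Fin m),
    ∑ v ∈ T, δ v ≤ ∑ u : Fin n, min (κ u) ((T.filter fun v => u ∉ F v).card)

lemma submod (κ : Fin n → ℕ) (F : Fin m → Finset (Fin n)) (u : Fin n) (T₁ T₂ : Finset (Fin m)) :
    min (κ u) (((T₁ ∪ T₂).filter fun v => u ∉ F v).card)
      + min (κ u) (((T₁ ∩ T₂).filter fun v => u ∉ F v).card)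
    ≤ min (κ u) ((T₁.filter fun v => u ∉ F v).card)
      + min (κ u) ((T₂.filter fun v => u ∉ F v).card) := by
  have h1 : ((T₁ ∪ T₂).filter fun v => u ∉ F v) =
      (T₁.filter fun v => u ∉ F v) ∪ (T₂.filter fun v => u ∉ F v) := filter_union _ _ _
  have h2 : ((T₁ ∩ T₂).filter fun v => u ∉ F v) =
      (T₁.filter fun v => u ∉ F v) ∩ (T₂.filter fun v => u ∉ F v) := filter_inter_distrib _ _ _
  rw [h1, h2]
  set A := (T₁.filter fun v => u ∉ F v)
  set B := (T₂.filter fun v => u ∉ F v)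
  have hs : (A ∪ B).card + (A ∩ B).card = A.card + B.card := card_union_add_card_inter A B
  have hA : A.card ≤ (A ∪ B).card := card_le_card subset_union_left
  have hB : B.card ≤ (A ∪ B).card := card_le_card subset_union_right
  have hiA : (A ∩ B).card ≤ A.card := card_le_card inter_subset_left
  have hiB : (A ∩ B).card ≤ B.card := card_le_card inter_subset_right
  omega

lemma tight_union {κ : Fin n → ℕ} {δ : Fin m → ℕ} {F : Fin m → Finset (Fin n)}
    (hH : Hall κ δ F) {T₁ T₂ : Finset (Fin m)}
    (h1 : ∑ v ∈ T₁, δ v = ∑ u : Fin n, min (κ u) ((T₁.filter fun v => u ∉ F v).card))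
    (h2 : ∑ v ∈ T₂, δ v = ∑ u : Fin n, min (κ u) ((T₂.filter fun v => u ∉ F v).card)) :
    ∑ v ∈ T₁ ∪ T₂, δ v = ∑ u : Fin n, min (κ u) (((T₁ ∪ T₂).filter fun v => u ∉ F v).card) := by
  have hsum : ∑ v ∈ T₁ ∪ T₂, δ v + ∑ v ∈ T₁ ∩ T₂, δ v = ∑ v ∈ T₁, δ v + ∑ v ∈ T₂, δ v :=
    sum_union_inter
  have hsub : ∑ u : Fin n, min (κ u) (((T₁ ∪ T₂).filter fun v => u ∉ F v).card)
      + ∑ u : Fin n, min (κ u) (((T₁ ∩ T₂).filter fun v => u ∉ F v).card)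
      ≤ ∑ u : Fin n, min (κ u) ((T₁.filter fun v => u ∉ F v).card)
      + ∑ u : Fin n, min (κ u) ((T₂.filter fun v => u ∉ F v).card) := by
    rw [← sum_add_distrib, ← sum_add_distrib]
    exact sum_le_sum fun u _ => submod κ F u T₁ T₂
  have hu := hH (T₁ ∪ T₂)
  have hi := hH (T₁ ∩ T₂)
  omega


theorem sched : ∀ (fuel : ℕ) (κ : Fin n → ℕ) (δ : Fin m → ℕ) (F : Fin m → Finset (Fin n)),
    (∑ v, δ v) = fuel → Hall κ δ F →
    ∃ A : Fin n → Finset (Fin m),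
      (∀ u, (A u).card ≤ κ u) ∧ (∀ u v, v ∈ A u → u ∉ F v) ∧
      (∀ v, (univ.filter fun u => v ∈ A u).card = δ v) := by
  intro fuel
  induction fuel with
  | zero =>
    intro κ δ F hsum _
    refine ⟨fun _ => ∅, fun u => by simp, fun u v hv => by simp at hv, fun v => ?_⟩
    have : δ v = 0 := by
      have := (sum_eq_zero_iff (s := (univ : Finset (Fin m))) (f := δ)).1 hsum v (mem_univ v)
      exact this
    simp [this]
  | succ f ih =>
    intro κ δ F hsum hH
    obtain ⟨v₀, hv₀⟩ : ∃ v₀, 0 < δ v₀ := by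
      by_contra hc
      push_neg at hc
      have : ∑ v, δ v = 0 := sum_eq_zero fun v _ => Nat.le_zero.1 (hc v)
      omega
    -- new state as functions of u₀
    set κ' : Fin n → Fin n → ℕ := fun u₀ u => if u = u₀ then κ u - 1 else κ u with hκ'
    set δ' : Fin m → ℕ := fun v => if v = v₀ then δ v - 1 else δ v with hδ'
    set F' : Fin n → Fin m → Finset (Fin n) :=
      fun u₀ v => if v = v₀ then insert u₀ (F v) else F v with hF'
    have hδ'T : ∀ T : Finset (Fin m), v₀ ∉ T → ∑ v ∈ T, δ' v = ∑ v ∈ T, δ v := by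
      intro T hT
      refine sum_congr rfl fun v hv => ?_
      have : v ≠ v₀ := fun h => hT (h ▸ hv)
      simp [hδ', this]
    have hfilt : ∀ (u₀ u : Fin n) (T : Finset (Fin m)), v₀ ∉ T →
        (T.filter fun v => u ∉ F' u₀ v) = (T.filter fun v => u ∉ F v) := by
      intro u₀ u T hT
      refine filter_congr fun v hv => ?_
      have : v ≠ v₀ := fun h => hT (h ▸ hv)
      simp [hF', this]
    have hgood : ∃ u₀, (0 < κ u₀ ∧ u₀ ∉ F v₀) ∧ Hall (κ' u₀) δ' (F' u₀) := by
      by_contra hbad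
      push_neg at hbad
      -- allowed set is nonempty (else Hall {v₀} fails)
      -- for each allowed u₀ get a tight set avoiding v₀ with κ u₀ ≤ a
      have key : ∀ u₀, 0 < κ u₀ → u₀ ∉ F v₀ → ∃ T : Finset (Fin m),
          v₀ ∉ T ∧
          (∑ v ∈ T, δ v = ∑ u : Fin n, min (κ u) ((T.filter fun v => u ∉ F v).card)) ∧
          κ u₀ ≤ (T.filter fun v => u₀ ∉ F v).card := by
        intro u₀ hκ₀ hF₀
        have hnot := hbad u₀ ⟨hκ₀, hF₀⟩
        rw [Hall] at hnot
        push_neg at hnot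
        obtain ⟨T, hT⟩ := hnot
        by_cases hvT : v₀ ∈ T
        · exfalso
          -- RHS' ≥ RHS - 1 and LHS' = LHS - 1
          have hLHS : ∑ v ∈ T, δ' v + 1 = ∑ v ∈ T, δ v := by
            have h1 : ∑ v ∈ T, δ' v = ∑ v ∈ T.erase v₀, δ' v + δ' v₀ :=
              (sum_erase_add T δ' hvT).symm
            have h2 : ∑ v ∈ T, δ v = ∑ v ∈ T.erase v₀, δ v + δ v₀ :=
              (sum_erase_add T δ hvT).symm
            have h3 : ∑ v ∈ T.erase v₀, δ' v = ∑ v ∈ T.erase v₀, δ v :=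
              hδ'T _ (notMem_erase _ _)
            have h4 : δ' v₀ = δ v₀ - 1 := by simp [hδ']
            omega
          have hRHS : ∀ u : Fin n,
              min (κ u) ((T.filter fun v => u ∉ F v).card)
                ≤ min (κ' u₀ u) ((T.filter fun v => u ∉ F' u₀ v).card) + (if u = u₀ then 1 else 0) := by
            intro u
            by_cases hu : u = u₀
            · subst hu
              have hfe : (T.filter fun v => u ∉ F' u v) = (T.filter fun v => u ∉ F v).erase v₀ := by
                ext v
                simp only [mem_filter, mem_erase, hF']
                constructor
                · rintro ⟨hvT', hvF⟩
                  by_cases hvv : v = v₀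
                  · exfalso; apply hvF; simp [hvv]
                  · simp only [hvv, if_false] at hvF
                    exact ⟨hvv, hvT', hvF⟩
                · rintro ⟨hvv, hvT', hvF⟩
                  refine ⟨hvT', ?_⟩
                  simp [hvv, hvF]
              rw [hfe]
              have hmem : v₀ ∈ (T.filter fun v => u ∉ F v) := by
                simp [mem_filter, hvT, hF₀]
              rw [card_erase_of_mem hmem]
              simp only [hκ', if_pos rfl, if_true, eq_self_iff_true]
              omega
            · have : (T.filter fun v => u ∉ F' u₀ v) = (T.filter fun v => u ∉ F v) := by
                refine filter_congr fun v hv => ?_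
                by_cases hvv : v = v₀
                · subst hvv
                  simp [hF', hu]
                · simp [hF', hvv]
              rw [this]
              simp [hκ', hu]
          have hR : ∑ u : Fin n, min (κ u) ((T.filter fun v => u ∉ F v).card)
              ≤ (∑ u : Fin n, min (κ' u₀ u) ((T.filter fun v => u ∉ F' u₀ v).card)) + 1 := by
            calc ∑ u : Fin n, min (κ u) ((T.filter fun v => u ∉ F v).card)
                ≤ ∑ u : Fin n, (min (κ' u₀ u) ((T.filter fun v => u ∉ F' u₀ v).card)
                    + (if u = u₀ then 1 else 0)) := sum_le_sum fun u _ => hRHS u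
              _ = (∑ u : Fin n, min (κ' u₀ u) ((T.filter fun v => u ∉ F' u₀ v).card))
                    + ∑ u : Fin n, (if u = u₀ then 1 else 0) := sum_add_distrib
              _ = (∑ u : Fin n, min (κ' u₀ u) ((T.filter fun v => u ∉ F' u₀ v).card)) + 1 := by
                    rw [sum_ite_eq' univ u₀ (fun _ => 1)]
                    simp
          have := hH T
          omega
        · -- v₀ ∉ T : tightness and κ u₀ ≤ a
          refine ⟨T, hvT, ?_, ?_⟩
          · have hLHS : ∑ v ∈ T, δ' v = ∑ v ∈ T, δ v := hδ'T T hvT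
            have hRHS : ∀ u : Fin n, u ≠ u₀ →
                min (κ' u₀ u) ((T.filter fun v => u ∉ F' u₀ v).card)
                  = min (κ u) ((T.filter fun v => u ∉ F v).card) := by
              intro u hu
              rw [hfilt u₀ u T hvT]
              simp [hκ', hu]
            have hu₀ : min (κ u₀ - 1) ((T.filter fun v => u₀ ∉ F v).card) + 1
                ≥ min (κ u₀) ((T.filter fun v => u₀ ∉ F v).card) := by omega
            have hsplit : ∀ (g : Fin n → ℕ), ∑ u : Fin n, g u = g u₀ + ∑ u ∈ univ.erase u₀, g u := by
              intro g
              rw [add_comm, sum_erase_add _ _ (mem_univ u₀)]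
            have e1 := hsplit (fun u => min (κ' u₀ u) ((T.filter fun v => u ∉ F' u₀ v).card))
            have e2 := hsplit (fun u => min (κ u) ((T.filter fun v => u ∉ F v).card))
            have e3 : ∑ u ∈ univ.erase u₀, min (κ' u₀ u) ((T.filter fun v => u ∉ F' u₀ v).card)
                = ∑ u ∈ univ.erase u₀, min (κ u) ((T.filter fun v => u ∉ F v).card) :=
              sum_congr rfl fun u hu => hRHS u (ne_of_mem_erase hu)
            have e4 : κ' u₀ u₀ = κ u₀ - 1 := by simp [hκ']
            have e5 : (T.filter fun v => u₀ ∉ F' u₀ v) = (T.filter fun v => u₀ ∉ F v) :=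
              hfilt u₀ u₀ T hvT
            have := hH T
            rw [hLHS, e1, e5, e4, e3] at hT
            omega
          · -- κ u₀ ≤ a u₀ T
            by_contra hko
            push_neg at hko
            -- then the u₀-term did not change, contradiction with hH T
            have hLHS : ∑ v ∈ T, δ' v = ∑ v ∈ T, δ v := hδ'T T hvT
            have e5 : (T.filter fun v => u₀ ∉ F' u₀ v) = (T.filter fun v => u₀ ∉ F v) :=
              hfilt u₀ u₀ T hvT
            have hRHSall : ∀ u : Fin n,
                min (κ' u₀ u) ((T.filter fun v => u ∉ F' u₀ v).card)
                  = min (κ u) ((T.filter fun v => u ∉ F v).card) := by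
              intro u
              by_cases hu : u = u₀
              · subst hu
                rw [e5]
                simp only [hκ', if_pos rfl]
                omega
              · rw [hfilt u₀ u T hvT]
                simp [hκ', hu]
            have : ∑ u : Fin n, min (κ' u₀ u) ((T.filter fun v => u ∉ F' u₀ v).card)
                = ∑ u : Fin n, min (κ u) ((T.filter fun v => u ∉ F v).card) :=
              sum_congr rfl fun u _ => hRHSall u
            have := hH T
            omega
      -- Build the union of all tight sets avoiding v₀
      classical
      set 𝒯 : Finset (Finset (Fin m)) :=
        univ.filter (fun T : Finset (Fin m) => v₀ ∉ T ∧
          (∑ v ∈ T, δ v = ∑ u : Fin n, min (κ u) ((T.filter fun v => u ∉ F v).card))) with h𝒯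
      set Th : Finset (Fin m) := 𝒯.sup id with hTh
      have hPTh : v₀ ∉ Th ∧
          (∑ v ∈ Th, δ v = ∑ u : Fin n, min (κ u) ((Th.filter fun v => u ∉ F v).card)) := by
        refine Finset.sup_induction (p := fun T : Finset (Fin m) => v₀ ∉ T ∧
          (∑ v ∈ T, δ v = ∑ u : Fin n, min (κ u) ((T.filter fun v => u ∉ F v).card))) ?_ ?_ ?_
        · constructor
          · exact notMem_empty v₀
          · simp
        · rintro T₁ ⟨ha1, ha2⟩ T₂ ⟨hb1, hb2⟩
          refine ⟨?_, tight_union hH ha2 hb2⟩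
          simp only [sup_eq_union, mem_union]
          tauto
        · intro T hT
          simp only [h𝒯, mem_filter] at hT
          exact hT.2
      -- every allowed u₀ has κ u₀ ≤ a u₀ Th
      have hκa : ∀ u₀, 0 < κ u₀ → u₀ ∉ F v₀ → κ u₀ ≤ (Th.filter fun v => u₀ ∉ F v).card := by
        intro u₀ hκ₀ hF₀
        obtain ⟨T, hT1, hT2, hT3⟩ := key u₀ hκ₀ hF₀
        have hTmem : T ∈ 𝒯 := by
          simp only [h𝒯, mem_filter]
          exact ⟨mem_univ T, hT1, hT2⟩
        have hTle : T ⊆ Th := le_sup (f := id) hTmem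
        calc κ u₀ ≤ (T.filter fun v => u₀ ∉ F v).card := hT3
          _ ≤ (Th.filter fun v => u₀ ∉ F v).card :=
              card_le_card (filter_subset_filter _ hTle)
      -- contradiction with Hall (insert v₀ Th)
      have hfi : ∀ u : Fin n, ((insert v₀ Th).filter fun v => u ∉ F v)
          = if u ∉ F v₀ then insert v₀ (Th.filter fun v => u ∉ F v)
            else (Th.filter fun v => u ∉ F v) := by
        intro u
        by_cases hu : u ∉ F v₀ <;> simp [filter_insert, hu]
      have hmin : ∀ u : Fin n,
          min (κ u) (((insert v₀ Th).filter fun v => u ∉ F v).card)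
            = min (κ u) ((Th.filter fun v => u ∉ F v).card) := by
        intro u
        rw [hfi u]
        by_cases hu : u ∉ F v₀
        · rw [if_pos hu]
          have hnm : v₀ ∉ (Th.filter fun v => u ∉ F v) := fun hc => hPTh.1 (mem_of_mem_filter _ hc)
          rw [card_insert_of_notMem hnm]
          by_cases hκu : 0 < κ u
          · have := hκa u hκu hu
            omega
          · have : κ u = 0 := by omega
            simp [this]
        · rw [if_neg hu]
      have hHins := hH (insert v₀ Th)
      rw [sum_insert hPTh.1] at hHins
      have : ∑ u : Fin n, min (κ u) (((insert v₀ Th).filter fun v => u ∉ F v).card)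
          = ∑ u : Fin n, min (κ u) ((Th.filter fun v => u ∉ F v).card) :=
        sum_congr rfl fun u _ => hmin u
      omega
    -- good u₀ exists: recurse
    obtain ⟨u₀, ⟨hκ₀, hF₀⟩, hH'⟩ := hgood
    have hsum' : ∑ v, δ' v = f := by
      have h1 : ∑ v, δ' v = ∑ v ∈ (univ : Finset (Fin m)).erase v₀, δ' v + δ' v₀ :=
        (sum_erase_add _ δ' (mem_univ v₀)).symm
      have h2 : ∑ v, δ v = ∑ v ∈ (univ : Finset (Fin m)).erase v₀, δ v + δ v₀ :=
        (sum_erase_add _ δ (mem_univ v₀)).symm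
      have h3 : ∑ v ∈ (univ : Finset (Fin m)).erase v₀, δ' v
          = ∑ v ∈ (univ : Finset (Fin m)).erase v₀, δ v :=
        sum_congr rfl fun v hv => by simp [hδ', ne_of_mem_erase hv]
      have h4 : δ' v₀ = δ v₀ - 1 := by simp [hδ']
      omega
    obtain ⟨A', hA1, hA2, hA3⟩ := ih (κ' u₀) δ' (F' u₀) hsum' hH'
    refine ⟨fun u => if u = u₀ then insert v₀ (A' u₀) else A' u, ?_, ?_, ?_⟩
    · intro u
      by_cases hu : u = u₀
      · subst hu
        simp only [if_pos rfl, if_true, eq_self_iff_true]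
        have hnm : v₀ ∉ A' u := by
          intro hc
          have := hA2 u v₀ hc
          simp [hF'] at this
        rw [card_insert_of_notMem hnm]
        have := hA1 u
        simp only [hκ', if_pos rfl] at this
        omega
      · simp only [if_neg hu]
        have := hA1 u
        simp only [hκ', if_neg hu] at this
        exact this
    · intro u v hv
      by_cases hu : u = u₀
      · subst hu
        simp only [if_pos rfl, if_true, eq_self_iff_true, mem_insert] at hv
        rcases hv with rfl | hv
        · exact hF₀
        · have := hA2 u v hv
          by_cases hvv : v = v₀
          · subst hvv
            simp only [hF', if_pos rfl, mem_insert] at this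
            push_neg at this
            exact this.2
          · simpa [hF', hvv] using this
      · simp only [if_neg hu] at hv
        have := hA2 u v hv
        by_cases hvv : v = v₀
        · subst hvv
          simp only [hF', if_pos rfl, mem_insert] at this
          push_neg at this
          exact this.2
        · simpa [hF', hvv] using this
    · intro v
      by_cases hvv : v = v₀
      · subst hvv
        have heq : (univ.filter fun u => v ∈ (if u = u₀ then insert v (A' u₀) else A' u))
            = insert u₀ (univ.filter fun u => v ∈ A' u) := by
          ext u
          simp only [mem_filter, mem_insert, mem_univ, true_and]
          by_cases hu : u = u₀
          · subst hu
            simp only [if_pos rfl, if_true, eq_self_iff_true, mem_insert]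
            try tauto
          · simp only [if_neg hu]
            tauto
        rw [heq]
        have hnm : u₀ ∉ (univ.filter fun u => v ∈ A' u) := by
          simp only [mem_filter, mem_univ, true_and]
          intro hc
          have := hA2 u₀ v hc
          simp [hF'] at this
        rw [card_insert_of_notMem hnm]
        have := hA3 v
        simp only [hδ', if_pos rfl] at this
        omega
      · have heq : (univ.filter fun u => v ∈ (if u = u₀ then insert v₀ (A' u₀) else A' u))
            = (univ.filter fun u => v ∈ A' u) := by
          refine filter_congr fun u _ => ?_
          by_cases hu : u = u₀
          · subst hu
            simp only [if_pos rfl, if_true, eq_self_iff_true, mem_insert]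
            constructor
            · rintro (rfl | h)
              · exact absurd rfl hvv
              · exact h
            · tauto
          · simp [hu]
        rw [heq]
        have := hA3 v
        simpa [hδ', hvv] using this


end Sched

lemma double_count {n m : ℕ} (A : Fin n → Finset (Fin m)) :
    ∑ v : Fin m, (univ.filter fun u => v ∈ A u).card = ∑ u : Fin n, (A u).card := by
  have h1 : ∀ v : Fin m, (univ.filter fun u => v ∈ A u).card
      = ∑ u : Fin n, if v ∈ A u then 1 else 0 := by
    intro v
    rw [card_filter]
  have h2 : ∀ u : Fin n, (A u).card = ∑ v : Fin m, if v ∈ A u then 1 else 0 := by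
    intro u
    rw [sum_ite_mem, univ_inter, card_eq_sum_ones]
  simp_rw [h1, h2]
  exact sum_comm

lemma hall_init {n m : ℕ} (K d₀ r : ℕ) (δ : Fin m → ℕ) (F : Fin m → Finset (Fin n))
    (hrn : r ≤ n)
    (hrd : r * (K + d₀) ≤ n * K)
    (hδF : ∀ v, δ v + (F v).card = r)
    (hFu : ∀ u : Fin n, (univ.filter fun v => u ∈ F v).card ≤ d₀)
    (hSig : ∑ v, δ v = n * K) :
    Hall (fun _ => K) δ F := by
  intro T
  set t := T.card with ht
  set a : Fin n → ℕ := fun u => (T.filter fun v => u ∉ F v).card with ha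
  set x : Fin n → ℕ := fun u => (T.filter fun v => u ∈ F v).card with hx
  have hax : ∀ u, a u + x u = t := by
    intro u
    rw [ha, hx]
    have := card_filter_add_card_filter_not (s := T) (p := fun v => u ∉ F v)
    simp only [not_not] at this
    exact this
  have hxd : ∀ u, x u ≤ d₀ := by
    intro u
    calc x u ≤ (univ.filter fun v => u ∈ F v).card :=
          card_le_card (filter_subset_filter _ (subset_univ T))
      _ ≤ d₀ := hFu u
  have hX : ∑ u : Fin n, x u = ∑ v ∈ T, (F v).card := by
    have h1 : ∀ u : Fin n, x u = ∑ v ∈ T, if u ∈ F v then 1 else 0 := fun u => card_filter _ _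
    have h2 : ∀ v : Fin m, (F v).card = ∑ u : Fin n, if u ∈ F v then 1 else 0 := by
      intro v
      rw [sum_ite_mem, univ_inter, card_eq_sum_ones]
    simp_rw [h1, h2]
    exact sum_comm
  have hLX : (∑ v ∈ T, δ v) + (∑ u : Fin n, x u) = r * t := by
    rw [hX, ← sum_add_distrib]
    rw [sum_congr rfl fun v _ => hδF v, sum_const, smul_eq_mul, mul_comm]
  show ∑ v ∈ T, δ v ≤ ∑ u : Fin n, min K (a u)
  rcases le_or_gt t K with hcase | hcase
  · -- small case
    have hmin : ∀ u : Fin n, min K (a u) = a u := by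
      intro u
      have : a u ≤ t := by have := hax u; omega
      exact min_eq_right (le_trans this hcase)
    have hM2 : (∑ u : Fin n, min K (a u)) = ∑ u : Fin n, a u :=
      sum_congr rfl fun u _ => hmin u
    have hsum : (∑ u : Fin n, a u) + (∑ u : Fin n, x u) = n * t := by
      rw [← sum_add_distrib, sum_congr rfl fun u _ => hax u, sum_const, card_univ,
        Fintype.card_fin, smul_eq_mul]
    have hrt : r * t ≤ n * t := Nat.mul_le_mul_right t hrn
    omega
  rcases le_or_gt (K + d₀) t with hcase2 | hcase2
  · -- big case
    have hmin : ∀ u : Fin n, min K (a u) = K := by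
      intro u
      have h1 := hax u
      have h2 := hxd u
      have : K ≤ a u := by omega
      exact min_eq_left this
    rw [sum_congr rfl fun u _ => hmin u, sum_const, card_univ, Fintype.card_fin, smul_eq_mul]
    calc ∑ v ∈ T, δ v ≤ ∑ v, δ v := sum_le_sum_of_subset (subset_univ T)
      _ = n * K := hSig
  · -- middle case
    set β := t - K with hβ
    have hβ1 : 1 ≤ β := by omega
    have hβd : β < d₀ := by omega
    have htKβ : t = K + β := by omega
    -- pointwise: d₀ * K + β * x u ≤ d₀ * min K (a u) + d₀ * x u
    have hpt : ∀ u : Fin n, d₀ * K + β * x u ≤ d₀ * min K (a u) + d₀ * x u := by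
      intro u
      rcases le_total K (a u) with hm | hm
      · rw [min_eq_left hm]
        have h1 : β * x u ≤ d₀ * x u := Nat.mul_le_mul_right (x u) (le_of_lt hβd)
        omega
      · rw [min_eq_right hm]
        have h1 : β * x u ≤ β * d₀ := Nat.mul_le_mul_left β (hxd u)
        have h2 : d₀ * a u + d₀ * x u = d₀ * K + d₀ * β := by
          rw [← Nat.mul_add, ← Nat.mul_add, hax u, htKβ]
        have h3 : β * d₀ = d₀ * β := Nat.mul_comm _ _
        omega
    have hsumpt : ∑ u : Fin n, (d₀ * K + β * x u)
        ≤ ∑ u : Fin n, (d₀ * min K (a u) + d₀ * x u) := sum_le_sum fun u _ => hpt u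
    rw [sum_add_distrib, sum_add_distrib, sum_const, card_univ, Fintype.card_fin,
      smul_eq_mul, ← mul_sum, ← mul_sum, ← mul_sum] at hsumpt
    -- hsumpt : n * (d₀ * K) + β * X ≤ d₀ * M + d₀ * X
    set L := ∑ v ∈ T, δ v with hL
    set X := ∑ u : Fin n, x u with hXX
    set M := ∑ u : Fin n, min K (a u) with hM
    -- want L ≤ M
    have hrtnK : r * t ≤ n * K := by
      calc r * t ≤ r * (K + d₀) := Nat.mul_le_mul_left r (by omega)
        _ ≤ n * K := hrd
    -- d₀ * L + d₀ * X = d₀ * (r * t) ≤ d₀ * (n * K) = n * (d₀ * K)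
    have e1 : d₀ * L + d₀ * X = d₀ * (r * t) := by rw [← Nat.mul_add, hLX]
    have e2 : d₀ * (r * t) ≤ d₀ * (n * K) := Nat.mul_le_mul_left d₀ hrtnK
    have e3 : d₀ * (n * K) = n * (d₀ * K) := by ring
    have hd₀L : d₀ * L ≤ d₀ * M := by
      have hbx : 0 ≤ β * X := Nat.zero_le _
      omega
    exact Nat.le_of_mul_le_mul_left hd₀L (by omega)


section Build

variable {n m₀ : ℕ} (r : ℕ) (E₀ : Fin n → Finset (Fin m₀))

def NN (w : Fin m₀) : Finset (Fin n) := univ.filter fun u => w ∈ E₀ u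
def cc (w : Fin m₀) : ℕ := (NN E₀ w).card
def qq (w : Fin m₀) : ℕ := (cc E₀ w + r - 1) / r
def QQ (w : Fin m₀) : ℕ := ∑ w' ∈ univ.filter (· < w), qq r E₀ w'
def rk (w : Fin m₀) (u : Fin n) : ℕ := ((NN E₀ w).filter fun u' => u' < u).card
def sv (u : Fin n) (w : Fin m₀) : ℕ := QQ r E₀ w + rk E₀ w u / r

variable {r E₀}

lemma c_le_rq (hr : 0 < r) (w : Fin m₀) : cc E₀ w ≤ r * qq r E₀ w := by
  rcases Nat.eq_zero_or_pos (cc E₀ w) with h | h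
  · omega
  unfold qq
  set x := cc E₀ w + r - 1 with hx
  have h1 : r * (x / r) + x % r = x := Nat.div_add_mod x r
  have h2 : x % r < r := Nat.mod_lt _ hr
  set A := r * (x / r)
  omega

lemma rq_le (hr : 0 < r) (w : Fin m₀) : r * qq r E₀ w ≤ cc E₀ w + (r - 1) := by
  unfold qq
  set x := cc E₀ w + r - 1 with hx
  have h1 : r * (x / r) + x % r = x := Nat.div_add_mod x r
  set A := r * (x / r)
  omega

lemma rk_lt_c {w : Fin m₀} {u : Fin n} (hu : u ∈ NN E₀ w) : rk E₀ w u < cc E₀ w := by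
  unfold rk cc
  have hsub : ((NN E₀ w).filter fun u' => u' < u) ⊆ (NN E₀ w).erase u := by
    intro x hx
    rw [mem_filter] at hx
    exact mem_erase.2 ⟨ne_of_lt hx.2, hx.1⟩
  calc ((NN E₀ w).filter fun u' => u' < u).card ≤ ((NN E₀ w).erase u).card := card_le_card hsub
    _ < (NN E₀ w).card := card_erase_lt_of_mem hu

lemma rk_inj {w : Fin m₀} {u u' : Fin n} (hu : u ∈ NN E₀ w) (hu' : u' ∈ NN E₀ w)
    (h : rk E₀ w u = rk E₀ w u') : u = u' := by
  by_contra hne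
  have key : ∀ a b : Fin n, a ∈ NN E₀ w → b ∈ NN E₀ w → a < b → rk E₀ w a < rk E₀ w b := by
    intro a b ha hb hab
    unfold rk
    apply card_lt_card
    constructor
    · intro x hx
      rw [mem_filter] at hx ⊢
      exact ⟨hx.1, lt_trans hx.2 hab⟩
    · intro hsub
      have : a ∈ (NN E₀ w).filter fun u' => u' < b := mem_filter.2 ⟨ha, hab⟩
      have := hsub this
      rw [mem_filter] at this
      exact lt_irrefl a this.2
  rcases lt_or_gt_of_ne hne with h' | h'
  · exact absurd h (ne_of_lt (key u u' hu hu' h'))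
  · exact absurd h.symm (ne_of_lt (key u' u hu' hu h'))

lemma sv_bounds (hr : 0 < r) {w : Fin m₀} {u : Fin n} (hu : u ∈ NN E₀ w) :
    QQ r E₀ w ≤ sv r E₀ u w ∧ sv r E₀ u w < QQ r E₀ w + qq r E₀ w := by
  constructor
  · exact Nat.le_add_right _ _
  · unfold sv
    have h1 : rk E₀ w u < cc E₀ w := rk_lt_c hu
    have h2 : cc E₀ w ≤ r * qq r E₀ w := c_le_rq hr w
    have : rk E₀ w u / r < qq r E₀ w := by
      rw [Nat.div_lt_iff_lt_mul hr]
      calc rk E₀ w u < cc E₀ w := h1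
        _ ≤ r * qq r E₀ w := h2
        _ = qq r E₀ w * r := mul_comm _ _
    omega

lemma QQ_mono {w w' : Fin m₀} (h : w < w') : QQ r E₀ w + qq r E₀ w ≤ QQ r E₀ w' := by
  unfold QQ
  have : insert w (univ.filter (· < w)) ⊆ univ.filter (· < w') := by
    intro x hx
    rw [mem_insert] at hx
    rw [mem_filter]
    rcases hx with rfl | hx
    · exact ⟨mem_univ _, h⟩
    · rw [mem_filter] at hx
      exact ⟨mem_univ _, lt_trans hx.2 h⟩
  calc QQ r E₀ w + qq r E₀ w = ∑ w'' ∈ insert w (univ.filter (· < w)), qq r E₀ w'' := by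
        rw [sum_insert (by simp), add_comm]
        rfl
    _ ≤ ∑ w'' ∈ univ.filter (· < w'), qq r E₀ w'' := sum_le_sum_of_subset this
  
lemma Qq_le_M1 (w : Fin m₀) : QQ r E₀ w + qq r E₀ w ≤ ∑ w', qq r E₀ w' := by
  unfold QQ
  calc (∑ w'' ∈ univ.filter (· < w), qq r E₀ w'') + qq r E₀ w
      = ∑ w'' ∈ insert w (univ.filter (· < w)), qq r E₀ w'' := by
        rw [sum_insert (by simp)]
        ring
    _ ≤ ∑ w', qq r E₀ w' := sum_le_sum_of_subset (subset_univ _)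

lemma sv_inj (hr : 0 < r) {w w' : Fin m₀} {u u' : Fin n} (hu : u ∈ NN E₀ w)
    (hu' : u' ∈ NN E₀ w') (h : sv r E₀ u w = sv r E₀ u' w') : w = w' := by
  by_contra hne
  have b1 := sv_bounds hr hu
  have b2 := sv_bounds hr hu'
  rcases lt_or_gt_of_ne hne with h' | h'
  · have := QQ_mono (E₀ := E₀) (r := r) h'
    omega
  · have := QQ_mono (E₀ := E₀) (r := r) h'
    omega

end Build

end S14

open S14

/-- Conversion of a `d₀`-left-regular expander on `[n] ∪ [m₀]` into a `(d,r)`-biregular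
graph on `[n] ∪ [m]` (with `nd = mr`, `d₀ < d ≤ m₀` and `m ≥ m₀d/(d−d₀)`) preserving
any `(kmax, γ)`-expansion property of left subsets. -/
theorem stmt14 (n m₀ m d₀ d r kmax : ℕ) (γ : ℝ)
    (hn : 0 < n) (hm : 0 < m) (hd : 0 < d) (hr : 0 < r)
    (hbal : n * d = m * r) (h1 : d₀ < d) (h2 : d ≤ m₀)
    (h3 : m₀ * d ≤ m * (d - d₀))
    (E₀ : Fin n → Finset (Fin m₀)) (hreg : ∀ u, (E₀ u).card = d₀)
    (hexp : ∀ S : Finset (Fin n), S.card ≤ kmax →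
      γ * S.card ≤ ((S.biUnion E₀).card : ℝ)) :
    ∃ E : Fin n → Finset (Fin m),
      (∀ u, (E u).card = d) ∧
      (∀ v : Fin m, (Finset.univ.filter (fun u => v ∈ E u)).card = r) ∧
      (∀ S : Finset (Fin n), S.card ≤ kmax →
        γ * S.card ≤ ((S.biUnion E).card : ℝ)) := by
  classical
  set K := d - d₀ with hK
  have hKpos : 0 < K := by omega
  have hd0K : d₀ + K = d := by omega
  -- h3 now in terms of K via set
  -- basic inequalities
  have hm₀m : m₀ ≤ m := by
    have h4 : m₀ * d ≤ m * d := le_trans h3 (Nat.mul_le_mul_left m (by omega))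
    exact Nat.le_of_mul_le_mul_right h4 hd
  have hdm : d ≤ m := le_trans h2 hm₀m
  have hrn : r ≤ n := by
    have h4 : r * m ≤ n * m := by
      calc r * m = m * r := Nat.mul_comm _ _
        _ = n * d := hbal.symm
        _ ≤ n * m := Nat.mul_le_mul_left n hdm
    exact Nat.le_of_mul_le_mul_right h4 hm
  have hm₀rnK : m₀ * r ≤ n * K := by
    have h4 : (m₀ * r) * d ≤ (n * K) * d := by
      calc (m₀ * r) * d = (m₀ * d) * r := by ring
        _ ≤ (m * K) * r := Nat.mul_le_mul_right r h3
        _ = (m * r) * K := by ring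
        _ = (n * d) * K := by rw [hbal]
        _ = (n * K) * d := by ring
    exact Nat.le_of_mul_le_mul_right h4 hd
  have hrdnK : r * (K + d₀) ≤ n * K := by
    have hKd : K + d₀ = d := by omega
    rw [hKd]
    calc r * d = d * r := Nat.mul_comm _ _
      _ ≤ m₀ * r := Nat.mul_le_mul_right r h2
      _ ≤ n * K := hm₀rnK
  -- sum of degrees
  have hccsum : ∑ w, cc E₀ w = n * d₀ := by
    have : ∑ w : Fin m₀, cc E₀ w = ∑ u : Fin n, (E₀ u).card := by
      unfold cc NN
      exact double_count E₀
    rw [this, sum_congr rfl fun u _ => hreg u, sum_const, card_univ, Fintype.card_fin,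
      smul_eq_mul]
  -- M1 ≤ m
  have hM1 : (∑ w, qq r E₀ w) ≤ m := by
    have h5 : r * (∑ w, qq r E₀ w) ≤ n * d₀ + m₀ * (r - 1) := by
      rw [mul_sum]
      calc ∑ w, r * qq r E₀ w ≤ ∑ w, (cc E₀ w + (r - 1)) :=
            sum_le_sum fun w _ => rq_le hr w
        _ = (∑ w, cc E₀ w) + m₀ * (r - 1) := by
            rw [sum_add_distrib, sum_const, card_univ, Fintype.card_fin, smul_eq_mul]
        _ = n * d₀ + m₀ * (r - 1) := by rw [hccsum]
    have h6 : d * (n * d₀ + m₀ * (r - 1)) ≤ d * (r * m) := by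
      have e0 : d * (n * d₀ + m₀ * (r - 1)) = d * (n * d₀) + d * (m₀ * (r - 1)) := by ring
      have e1 : d * (n * d₀) = (m * r) * d₀ := by rw [← hbal]; ring
      have e2 : d * (m₀ * (r - 1)) = (m₀ * d) * (r - 1) := by ring
      have e3 : (m₀ * d) * (r - 1) ≤ (m * K) * (r - 1) := Nat.mul_le_mul_right _ h3
      have e4 : (m * r) * d₀ + (m * K) * (r - 1) ≤ d * (r * m) := by
        have e5 : (m * K) * (r - 1) ≤ (m * K) * r := Nat.mul_le_mul_left _ (by omega)
        have e6 : (m * r) * d₀ + (m * K) * r = d * (r * m) := by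
          rw [← hd0K]; ring
        omega
      omega
    have h7 : r * (∑ w, qq r E₀ w) ≤ r * m := by
      have := le_trans (Nat.mul_le_mul_left d h5) h6
      exact Nat.le_of_mul_le_mul_left this hd
    exact Nat.le_of_mul_le_mul_left h7 hr
  -- the split graph
  have hsvm : ∀ (u : Fin n) (w : Fin m₀), w ∈ E₀ u → sv r E₀ u w < m := by
    intro u w hw
    have hu : u ∈ NN E₀ w := mem_filter.2 ⟨mem_univ u, hw⟩
    have hb := (sv_bounds hr hu).2
    have hq := Qq_le_M1 (r := r) (E₀ := E₀) w
    omega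
  set Esp : Fin n → Finset (Fin m) := fun u =>
    (E₀ u).attach.image (fun w => (⟨sv r E₀ u w.1, hsvm u w.1 w.2⟩ : Fin m)) with hEsp
  have hmemNN : ∀ {u : Fin n} {w : Fin m₀}, w ∈ E₀ u → u ∈ NN E₀ w :=
    fun hw => mem_filter.2 ⟨mem_univ _, hw⟩
  have hEspcard : ∀ u, (Esp u).card = d₀ := by
    intro u
    rw [hEsp]
    rw [card_image_of_injOn, card_attach, hreg]
    intro w hw w' hw' hww
    have hval : sv r E₀ u w.1 = sv r E₀ u w'.1 := by
      have := congrArg Fin.val hww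
      simpa using this
    exact Subtype.ext (sv_inj hr (hmemNN w.2) (hmemNN w'.2) hval)
  have hmemEsp : ∀ (u : Fin n) (v : Fin m),
      v ∈ Esp u ↔ ∃ w ∈ E₀ u, sv r E₀ u w = (v : ℕ) := by
    intro u v
    rw [hEsp]
    simp only [mem_image, mem_attach, true_and, Subtype.exists]
    constructor
    · rintro ⟨w, hw, rfl⟩
      exact ⟨w, hw, rfl⟩
    · rintro ⟨w, hw, hval⟩
      exact ⟨w, hw, Fin.ext hval⟩
  set FF : Fin m → Finset (Fin n) := fun v => univ.filter fun u => v ∈ Esp u with hFF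
  have hcd : ∀ v : Fin m, (FF v).card ≤ r := by
    intro v
    rcases (FF v).eq_empty_or_nonempty with he | ⟨u₀, hu₀⟩
    · simp [he]
    · rw [hFF] at hu₀
      simp only [mem_filter, mem_univ, true_and] at hu₀
      obtain ⟨w₀, hw₀, hsv₀⟩ := (hmemEsp u₀ v).1 hu₀
      set i := rk E₀ w₀ u₀ / r with hi
      have hQi : QQ r E₀ w₀ + i = (v : ℕ) := hsv₀
      have key : ∀ u ∈ FF v, rk E₀ w₀ u ∈ Finset.Ico (r * i) (r * i + r) := by
        intro u hu
        rw [hFF] at hu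
        simp only [mem_filter, mem_univ, true_and] at hu
        obtain ⟨w, hw, hsvu⟩ := (hmemEsp u v).1 hu
        have hww : w = w₀ := sv_inj hr (hmemNN hw) (hmemNN hw₀) (hsvu.trans hsv₀.symm)
        subst hww
        have hdiv : rk E₀ w u / r = i := by
          have : QQ r E₀ w + rk E₀ w u / r = (v : ℕ) := hsvu
          omega
        have hmod := Nat.div_add_mod (rk E₀ w u) r
        have hmlt := Nat.mod_lt (rk E₀ w u) hr
        rw [mem_Ico]
        rw [hdiv] at hmod
        constructor <;> omega
      have hinj : Set.InjOn (fun u => rk E₀ w₀ u) (FF v) := by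
        intro u hu u' hu' h
        simp only [coe_filter, Set.mem_setOf_eq, hFF] at hu hu'
        obtain ⟨w, hw, hsvu⟩ := (hmemEsp u v).1 hu.2
        obtain ⟨w', hw', hsvu'⟩ := (hmemEsp u' v).1 hu'.2
        have hww : w = w₀ := sv_inj hr (hmemNN hw) (hmemNN hw₀) (hsvu.trans hsv₀.symm)
        have hww' : w' = w₀ := sv_inj hr (hmemNN hw') (hmemNN hw₀) (hsvu'.trans hsv₀.symm)
        exact rk_inj (hmemNN (hww ▸ hw)) (hmemNN (hww' ▸ hw')) h
      calc (FF v).card ≤ (Finset.Ico (r * i) (r * i + r)).card :=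
            card_le_card_of_injOn _ key hinj
        _ = r := by rw [Nat.card_Ico]; omega
  set δδ : Fin m → ℕ := fun v => r - (FF v).card with hδδ
  have hδF : ∀ v, δδ v + (FF v).card = r := fun v => Nat.sub_add_cancel (hcd v)
  have hFu : ∀ u : Fin n, (univ.filter fun v => u ∈ FF v).card ≤ d₀ := by
    intro u
    have heq : (univ.filter fun v => u ∈ FF v) = Esp u := by
      ext v
      simp only [mem_filter, mem_univ, true_and, hFF]
    rw [heq, hEspcard]
  have hSig : ∑ v, δδ v = n * K := by
    have h8 : ∑ v, (δδ v + (FF v).card) = ∑ v : Fin m, r :=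
      sum_congr rfl fun v _ => hδF v
    rw [sum_add_distrib, sum_const, card_univ, Fintype.card_fin, smul_eq_mul] at h8
    have h9 : ∑ v : Fin m, (FF v).card = n * d₀ := by
      rw [hFF]
      rw [double_count Esp]
      rw [sum_congr rfl fun u _ => hEspcard u, sum_const, card_univ, Fintype.card_fin,
        smul_eq_mul]
    have h10 : m * r = n * d := hbal.symm
    have h11 : n * d = n * d₀ + n * K := by rw [← hd0K]; ring
    omega
  -- apply scheduling
  obtain ⟨A, hA1, hA2, hA3⟩ := sched (∑ v, δδ v) (fun _ => K) δδ FF rfl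
    (hall_init K d₀ r δδ FF hrn hrdnK hδF hFu hSig)
  have hAcard : ∀ u, (A u).card = K := by
    have hsumA : ∑ u, (A u).card = n * K := by
      rw [← double_count A, sum_congr rfl fun v _ => hA3 v, hSig]
    by_contra hc
    push_neg at hc
    obtain ⟨u₀, hu₀⟩ := hc
    have hlt : (A u₀).card < K := lt_of_le_of_ne (hA1 u₀) hu₀
    have : ∑ u, (A u).card < ∑ u : Fin n, K :=
      sum_lt_sum (fun u _ => hA1 u) ⟨u₀, mem_univ u₀, hlt⟩
    rw [sum_const, card_univ, Fintype.card_fin, smul_eq_mul] at this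
    omega
  have hdisj : ∀ u, Disjoint (Esp u) (A u) := by
    intro u
    rw [disjoint_left]
    intro v hv hv'
    exact hA2 u v hv' (mem_filter.2 ⟨mem_univ u, hv⟩)
  refine ⟨fun u => Esp u ∪ A u, ?_, ?_, ?_⟩
  · intro u
    rw [card_union_of_disjoint (hdisj u), hEspcard, hAcard]
    omega
  · intro v
    have heq : (univ.filter fun u => v ∈ Esp u ∪ A u)
        = FF v ∪ (univ.filter fun u => v ∈ A u) := by
      ext u
      simp only [mem_filter, mem_univ, true_and, mem_union, hFF]
    rw [heq]
    have hdisj2 : Disjoint (FF v) (univ.filter fun u => v ∈ A u) := by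
      rw [disjoint_left]
      intro u hu hu'
      exact hA2 u v (mem_filter.1 hu').2 hu
    rw [card_union_of_disjoint hdisj2, hA3]
    have := hδF v
    omega
  · intro S hS
    have hmono : (S.biUnion E₀).card ≤ (S.biUnion fun u => Esp u ∪ A u).card := by
      set f : Fin m₀ → Fin m := fun w =>
        if h : ∃ u, u ∈ S ∧ w ∈ E₀ u then
          ⟨sv r E₀ h.choose w, hsvm h.choose w h.choose_spec.2⟩
        else ⟨0, hm⟩ with hf
      apply card_le_card_of_injOn f
      · intro w hw
        rw [mem_coe, mem_biUnion] at hw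
        obtain ⟨u, hu, hwu⟩ := hw
        have hex : ∃ u, u ∈ S ∧ w ∈ E₀ u := ⟨u, hu, hwu⟩
        rw [mem_coe, mem_biUnion]
        refine ⟨hex.choose, hex.choose_spec.1, ?_⟩
        rw [mem_union]
        left
        simp only [hf]
        rw [dif_pos hex]
        rw [hmemEsp]
        exact ⟨w, hex.choose_spec.2, rfl⟩
      · intro w hw w' hw' hww
        rw [mem_coe, mem_biUnion] at hw hw'
        obtain ⟨u, hu, hwu⟩ := hw
        obtain ⟨u', hu', hwu'⟩ := hw'
        have hex : ∃ u, u ∈ S ∧ w ∈ E₀ u := ⟨u, hu, hwu⟩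
        have hex' : ∃ u, u ∈ S ∧ w' ∈ E₀ u := ⟨u', hu', hwu'⟩
        simp only [hf] at hww
        rw [dif_pos hex, dif_pos hex'] at hww
        have hval : sv r E₀ hex.choose w = sv r E₀ hex'.choose w' := by
          have := congrArg Fin.val hww
          simpa using this
        exact sv_inj hr (hmemNN hex.choose_spec.2) (hmemNN hex'.choose_spec.2) hval
    calc γ * S.card ≤ ((S.biUnion E₀).card : ℝ) := hexp S hS
      _ ≤ ((S.biUnion fun u => Esp u ∪ A u).card : ℝ) := Nat.cast_le.mpr hmono
end

section
/- Let d ≥ 2 be an integer and q the smallest power of 2 with q ≥ d. Suppose for every positive integer h, prime power q, and powers n', m' of q there exists a bipartite graph on [n'] ∪ [m'] with left degree q that is a (k, q−Δ)-expander with k = h^{log_q m' − 1} and Δ = (h−1)(log_q n' − 1)(log_q m' − 1). Then for any α ∈ (0,1] and positive integers n, m ≥ q there exists a bipartite graph on [n] ∪ [m] with left degree d that is a (k_max, d − Δ)-expander with k_max = (m/(4d²))^α and Δ = (2d)^α (log_d n)(log_d m). -/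
/-- Derivation of Corollary `guv-corollary` from the Guruswami–Umans–Vadhan expander:
assuming for every positive integer `h`, prime power `q`, and powers `n' = q^a`,
`m' = q^b` of `q` there is a `q`-left-regular `(h^{b−1}, q − (h−1)(a−1)(b−1))`-expander
on `[n'] ∪ [m']`, then for `d ≥ 2`, `q` the least power of `2` with `q ≥ d`,
any `α ∈ (0,1]` and `n, m ≥ q` there is a `d`-left-regular
`((m/(4d²))^α, d − (2d)^α (log_d n)(log_d m))`-expander on `[n] ∪ [m]`. -/
theorem stmt16
    (hguv : ∀ h q a b : ℕ, 0 < h → IsPrimePow q → 0 < a → 0 < b →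
      ∃ E : Fin (q ^ a) → Finset (Fin (q ^ b)),
        (∀ u, (E u).card = q) ∧
        (∀ S : Finset (Fin (q ^ a)), S.card ≤ h ^ (b - 1) →
          ((q : ℝ) - ((h : ℝ) - 1) * ((a : ℝ) - 1) * ((b : ℝ) - 1)) * S.card ≤
            ((S.biUnion E).card : ℝ)))
    (d q : ℕ) (hd : 2 ≤ d)
    (hq : IsLeast {p : ℕ | (∃ k : ℕ, p = 2 ^ k) ∧ d ≤ p} q)
    (α : ℝ) (hα0 : 0 < α) (hα1 : α ≤ 1)
    (n m : ℕ) (hn : q ≤ n) (hm : q ≤ m) :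
    ∃ E : Fin n → Finset (Fin m),
      (∀ u, (E u).card = d) ∧
      (∀ S : Finset (Fin n), (S.card : ℝ) ≤ ((m : ℝ) / (4 * d ^ 2)) ^ α →
        ((d : ℝ) - (2 * (d : ℝ)) ^ α * Real.logb d n * Real.logb d m) * S.card ≤
          ((S.biUnion E).card : ℝ)) := by
  obtain ⟨⟨⟨k0, hqpow⟩, hdq⟩, hqmin⟩ := hq
  have hq2 : 2 ≤ q := hd.trans hdq
  have hq1 : 1 < q := hq2
  have hq1R : (1 : ℝ) < q := by exact_mod_cast hq1
  have hq0R : (0 : ℝ) < q := by positivity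
  have hd0R : (0 : ℝ) < d := by positivity
  -- q < 2 d by minimality
  have hqlt : q < 2 * d := by
    rcases k0 with _ | k
    · simp at hqpow; omega
    · by_contra hcon
      push_neg at hcon
      have h2k : d ≤ 2 ^ k := by
        have : q = 2 * 2 ^ k := by rw [hqpow, pow_succ]; ring
        omega
      have := hqmin ⟨⟨k, rfl⟩, h2k⟩
      rw [hqpow, pow_succ] at this
      have h2k0 : 0 < 2 ^ k := by positivity
      omega
  have hqltR : (q : ℝ) ≤ 2 * d := by exact_mod_cast hqlt.le
  have hqprime : IsPrimePow q := by
    have hk0 : 0 < k0 := by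
      rcases Nat.eq_zero_or_pos k0 with h | h
      · subst h; simp at hqpow; omega
      · exact h
    exact ⟨2, k0, Nat.prime_iff.mp Nat.prime_two, hk0, hqpow.symm⟩
  -- parameters
  set a := Nat.clog q n with ha_def
  set b := Nat.log q m with hb_def
  set h := ⌈(q : ℝ) ^ α⌉₊ with hh_def
  have hn2 : 2 ≤ n := hq2.trans hn
  have hm1 : 0 < m := lt_of_lt_of_le (by omega) hm
  have ha : 0 < a := Nat.clog_pos hq1 hn2
  have hb : 0 < b := by
    exact (Nat.le_log_iff_pow_le hq1 hm1.ne').mpr (by rw [pow_one]; exact hm)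
  have hna : n ≤ q ^ a := Nat.le_pow_clog hq1 n
  have han1 : q ^ (a - 1) < n := Nat.pow_pred_clog_lt_self hq1 hn2
  have hbm : q ^ b ≤ m := Nat.pow_log_le_self q hm1.ne'
  have hmb : m < q ^ (b + 1) := Nat.lt_pow_succ_log_self hq1 m
  have hqα0 : (0 : ℝ) < (q : ℝ) ^ α := Real.rpow_pos_of_pos hq0R α
  have hh : 0 < h := Nat.ceil_pos.mpr hqα0
  have hqαh : (q : ℝ) ^ α ≤ h := Nat.le_ceil _
  have hh1 : (h : ℝ) - 1 ≤ (q : ℝ) ^ α := by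
    have := Nat.ceil_lt_add_one (le_of_lt hqα0)
    rw [← hh_def] at this
    linarith
  obtain ⟨E', hE'card, hE'exp⟩ := hguv h q a b hh hqprime ha hb
  -- choose d-subsets
  have hchoose : ∀ u : Fin n, ∃ t ⊆ E' (Fin.castLE hna u), t.card = d := fun u =>
    Finset.exists_subset_card_eq (by rw [hE'card]; exact hdq)
  choose t ht htcard using hchoose
  refine ⟨fun u => (t u).image (Fin.castLE hbm), fun u => ?_, ?_⟩
  · rw [Finset.card_image_of_injective _ (Fin.castLE_injective hbm)]; exact htcard u
  intro S hS
  -- the key size bound : k_max ≤ h^(b-1)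
  have hpowcast : ((q : ℝ) ^ (b - 1 : ℕ)) ^ α = ((q : ℝ) ^ α) ^ (b - 1 : ℕ) := by
    rw [← Real.rpow_natCast (q : ℝ) (b - 1), ← Real.rpow_natCast ((q : ℝ) ^ α) (b - 1),
      ← Real.rpow_mul hq0R.le, ← Real.rpow_mul hq0R.le, mul_comm]
  have hm4 : (m : ℝ) / (4 * d ^ 2) ≤ (q : ℝ) ^ (b - 1 : ℕ) := by
    have h1 : (m : ℝ) < (q : ℝ) ^ (b + 1 : ℕ) := by exact_mod_cast hmb
    have h2 : (q : ℝ) ^ (b + 1 : ℕ) = (q : ℝ) ^ (b - 1 : ℕ) * (q : ℝ) ^ 2 := by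
      rw [← pow_add]; congr 1; omega
    have h3 : (q : ℝ) ^ 2 ≤ 4 * d ^ 2 := by nlinarith
    rw [div_le_iff₀ (by positivity)]
    calc (m : ℝ) ≤ (q : ℝ) ^ (b - 1 : ℕ) * (q : ℝ) ^ 2 := by rw [← h2]; linarith
      _ ≤ (q : ℝ) ^ (b - 1 : ℕ) * (4 * d ^ 2) := by
          have : (0 : ℝ) ≤ (q : ℝ) ^ (b - 1 : ℕ) := by positivity
          nlinarith
  have hkmax : ((m : ℝ) / (4 * d ^ 2)) ^ α ≤ ((h ^ (b - 1) : ℕ) : ℝ) := by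
    have h0 : (0 : ℝ) ≤ (m : ℝ) / (4 * d ^ 2) := by positivity
    calc ((m : ℝ) / (4 * d ^ 2)) ^ α ≤ ((q : ℝ) ^ (b - 1 : ℕ)) ^ α :=
          Real.rpow_le_rpow h0 hm4 hα0.le
      _ = ((q : ℝ) ^ α) ^ (b - 1 : ℕ) := hpowcast
      _ ≤ (h : ℝ) ^ (b - 1 : ℕ) := pow_le_pow_left₀ hqα0.le hqαh _
      _ = ((h ^ (b - 1) : ℕ) : ℝ) := by push_cast; ring
  have hScard : S.card ≤ h ^ (b - 1) := by
    have : (S.card : ℝ) ≤ ((h ^ (b - 1) : ℕ) : ℝ) := le_trans hS hkmax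
    exact_mod_cast this
  -- apply the GUV expander to the image of S
  set S' := S.image (Fin.castLE hna) with hS'_def
  have hS'card : S'.card = S.card := Finset.card_image_of_injective S (Fin.castLE_injective hna)
  have hexp := hE'exp S' (by rw [hS'card]; exact hScard)
  rw [hS'card] at hexp
  have hbiU : S'.biUnion E' = S.biUnion (fun u => E' (Fin.castLE hna u)) := by
    rw [hS'_def, Finset.image_biUnion]
  rw [hbiU] at hexp
  -- edge removal bound
  have hsub : S.biUnion (fun u => E' (Fin.castLE hna u)) ⊆
      (S.biUnion t) ∪ (S.biUnion fun u => E' (Fin.castLE hna u) \ t u) := by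
    intro x hx
    simp only [Finset.mem_biUnion, Finset.mem_union, Finset.mem_sdiff] at hx ⊢
    obtain ⟨u, hu, hxu⟩ := hx
    by_cases hxt : x ∈ t u
    · exact Or.inl ⟨u, hu, hxt⟩
    · exact Or.inr ⟨u, hu, hxu, hxt⟩
  have hcard2 : (S.biUnion fun u => E' (Fin.castLE hna u) \ t u).card ≤ S.card * (q - d) := by
    calc (S.biUnion fun u => E' (Fin.castLE hna u) \ t u).card
        ≤ ∑ u ∈ S, (E' (Fin.castLE hna u) \ t u).card := Finset.card_biUnion_le
      _ = ∑ u ∈ S, (q - d) := by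
          refine Finset.sum_congr rfl fun u _ => ?_
          rw [Finset.card_sdiff_of_subset (ht u), hE'card, htcard]
      _ = S.card * (q - d) := by rw [Finset.sum_const, smul_eq_mul]
  have hremove : (S.biUnion (fun u => E' (Fin.castLE hna u))).card ≤
      (S.biUnion t).card + S.card * (q - d) := by
    calc (S.biUnion (fun u => E' (Fin.castLE hna u))).card
        ≤ ((S.biUnion t) ∪ (S.biUnion fun u => E' (Fin.castLE hna u) \ t u)).card :=
          Finset.card_le_card hsub
      _ ≤ (S.biUnion t).card + (S.biUnion fun u => E' (Fin.castLE hna u) \ t u).card :=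
          Finset.card_union_le _ _
      _ ≤ (S.biUnion t).card + S.card * (q - d) := by omega
  have himg : (S.biUnion fun u => (t u).image (Fin.castLE hbm)).card = (S.biUnion t).card := by
    rw [← Finset.biUnion_image, Finset.card_image_of_injective _ (Fin.castLE_injective hbm)]
  -- bound the error term P ≤ Δ
  have hd1R : (1 : ℝ) < d := by exact_mod_cast hd
  have hlogd0 : (0 : ℝ) < Real.log d := Real.log_pos hd1R
  have hlogq : Real.log d ≤ Real.log q := Real.log_le_log hd0R (by exact_mod_cast hdq)
  have hbasechange : ∀ x : ℕ, 1 ≤ x → Real.logb q x ≤ Real.logb d x := by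
    intro x hx
    unfold Real.logb
    have hlx : (0 : ℝ) ≤ Real.log x := Real.log_nonneg (by exact_mod_cast hx)
    gcongr
  have hha : (a : ℝ) - 1 ≤ Real.logb d n := by
    have h1 : ((a - 1 : ℕ) : ℝ) ≤ Real.logb q n := by
      rw [Real.le_logb_iff_rpow_le hq1R (by exact_mod_cast hn2.trans_lt' (by omega) : (0:ℝ) < n)]
      rw [Real.rpow_natCast]
      exact_mod_cast han1.le
    have h2 : ((a - 1 : ℕ) : ℝ) = (a : ℝ) - 1 := by
      have : 1 ≤ a := ha
      push_cast [Nat.cast_sub this]; ring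
    rw [← h2]
    exact h1.trans (hbasechange n (by omega))
  have hhb : (b : ℝ) - 1 ≤ Real.logb d m := by
    have h1 : ((b - 1 : ℕ) : ℝ) ≤ Real.logb q m := by
      rw [Real.le_logb_iff_rpow_le hq1R (by exact_mod_cast hm1 : (0:ℝ) < m)]
      rw [Real.rpow_natCast]
      have : q ^ (b - 1) ≤ m := le_trans (Nat.pow_le_pow_right (by omega) (by omega)) hbm
      exact_mod_cast this
    have h2 : ((b - 1 : ℕ) : ℝ) = (b : ℝ) - 1 := by
      have : 1 ≤ b := hb
      push_cast [Nat.cast_sub this]; ring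
    rw [← h2]
    exact h1.trans (hbasechange m (by omega))
  have hh2d : (h : ℝ) - 1 ≤ (2 * (d : ℝ)) ^ α :=
    hh1.trans (Real.rpow_le_rpow hq0R.le hqltR hα0.le)
  have hP : ((h : ℝ) - 1) * ((a : ℝ) - 1) * ((b : ℝ) - 1) ≤
      (2 * (d : ℝ)) ^ α * Real.logb d n * Real.logb d m := by
    have h1 : (0 : ℝ) ≤ (h : ℝ) - 1 := by
      have : 1 ≤ h := hh
      have : (1 : ℝ) ≤ h := by exact_mod_cast this
      linarith
    have h2 : (0 : ℝ) ≤ (a : ℝ) - 1 := by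
      have : 1 ≤ a := ha
      have : (1 : ℝ) ≤ a := by exact_mod_cast this
      linarith
    have h3 : (0 : ℝ) ≤ (b : ℝ) - 1 := by
      have : 1 ≤ b := hb
      have : (1 : ℝ) ≤ b := by exact_mod_cast this
      linarith
    have hL1 : (0 : ℝ) ≤ Real.logb d n := le_trans h2 hha
    have hL2 : (0 : ℝ) ≤ Real.logb d m := le_trans h3 hhb
    have h2d : (0 : ℝ) ≤ (2 * (d : ℝ)) ^ α := le_trans h1 hh2d
    gcongr
  -- put everything together over ℝ
  have hc0 : (0 : ℝ) ≤ S.card := Nat.cast_nonneg _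
  have hremR : ((S.biUnion (fun u => E' (Fin.castLE hna u))).card : ℝ) ≤
      ((S.biUnion fun u => (t u).image (Fin.castLE hbm)).card : ℝ) +
        (S.card : ℝ) * ((q : ℝ) - d) := by
    have h1 : ((S.biUnion (fun u => E' (Fin.castLE hna u))).card : ℝ) ≤
        (((S.biUnion t).card + S.card * (q - d) : ℕ) : ℝ) := Nat.cast_le.mpr hremove
    rw [himg]
    push_cast [Nat.cast_sub hdq] at h1
    linarith
  set P := ((h : ℝ) - 1) * ((a : ℝ) - 1) * ((b : ℝ) - 1) with hP_def
  set g := ((S.biUnion fun u => (t u).image (Fin.castLE hbm)).card : ℝ) with hg_def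
  have key : ((d : ℝ) - P) * S.card ≤ g := by
    linarith [hremR, hexp]
  have hfin : ((d : ℝ) - (2 * (d : ℝ)) ^ α * Real.logb d n * Real.logb d m) * S.card ≤
      ((d : ℝ) - P) * S.card :=
    mul_le_mul_of_nonneg_right (by linarith [hP]) hc0
  exact hfin.trans key
end
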